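/- Let F: Mod(R) → Mod(R′) be a k-linear functor between module categories over k-algebras R, R′ with anti-involutions, and suppose F admits a Ψ-adjoint F^∨. Then F is isomorphic to the functor K ⊗_R (−) where K = F(R) is the natural (R′, R)-bimodule, and F^∨(R′) ≅ F(R)^ψ as (R, R′)-bimodules. -/

import Mathlib

open CategoryTheory TensorProduct

variable (R : Type) [Ring R] (ψ : R →+* Rᵐᵒᵖ)

def psiRelSet (M N : Type) [AddCommGroup M] [AddCommGroup N] [Module R M] [Module R N] :
    Set (M ⊗[ℤ] N) :=
  {z | ∃ (r : R) (m : M) (n : N), z = ((ψ r).unop • m) ⊗ₜ[ℤ] n - m ⊗ₜ[ℤ] (r • n)}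

def PsiCar (M N : Type) [AddCommGroup M] [AddCommGroup N] [Module R M] [Module R N] : Type :=
  (M ⊗[ℤ] N) ⧸ Submodule.span ℤ (psiRelSet R ψ M N)

noncomputable instance (M N : Type) [AddCommGroup M] [AddCommGroup N] [Module R M]
    [Module R N] : AddCommGroup (PsiCar R ψ M N) := by
  unfold PsiCar; infer_instance

noncomputable def psiMap {M M' N N' : ModuleCat R} (f : M ⟶ M') (g : N ⟶ N') :
    PsiCar R ψ M N →ₗ[ℤ] PsiCar R ψ M' N' :=
  Submodule.mapQ _ _
    (TensorProduct.map f.hom.toAddMonoidHom.toIntLinearMap g.hom.toAddMonoidHom.toIntLinearMap)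
    (by
      rw [Submodule.span_le]
      rintro z ⟨r, m, n, rfl⟩
      simp only [SetLike.mem_coe, Submodule.mem_comap, map_sub, TensorProduct.map_tmul]
      refine Submodule.subset_span ⟨r, f m, g n, ?_⟩
      simp [map_smul]
      erw [map_sub, TensorProduct.map_tmul, TensorProduct.map_tmul]
      simp)

lemma psiMap_id (M N : ModuleCat R) :
    psiMap R ψ (𝟙 M) (𝟙 N) = LinearMap.id := by
  apply Submodule.linearMap_qext
  apply TensorProduct.ext'
  intro m n
  simp [psiMap, Submodule.mapQ_apply]
  rfl

lemma psiMap_comp {M M' M'' N N' N'' : ModuleCat R}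
    (f : M ⟶ M') (f' : M' ⟶ M'') (g : N ⟶ N') (g' : N' ⟶ N'') :
    (psiMap R ψ f' g').comp (psiMap R ψ f g) = psiMap R ψ (f ≫ f') (g ≫ g') := by
  apply Submodule.linearMap_qext
  apply TensorProduct.ext'
  intro m n
  simp [psiMap, Submodule.mapQ_apply]
  rfl

noncomputable def PsiFunctor : ModuleCat R ⥤ ModuleCat R ⥤ AddCommGrpCat where
  obj M :=
    { obj := fun N => AddCommGrpCat.of (PsiCar R ψ M N)
      map := fun g => AddCommGrpCat.ofHom (psiMap R ψ (𝟙 M) g).toAddMonoidHom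
      map_id := by
        intro N
        ext z
        exact congrArg (fun h => h z) (congrArg LinearMap.toAddMonoidHom (psiMap_id R ψ M N))
      map_comp := by
        intro N N' N'' g g'
        ext z
        have := psiMap_comp R ψ (𝟙 M) (𝟙 M) g g'
        simp only [Category.comp_id] at this
        exact (congrArg (fun h => h z) (congrArg LinearMap.toAddMonoidHom this)).symm }
  map f :=
    { app := fun N => AddCommGrpCat.ofHom (psiMap R ψ f (𝟙 N)).toAddMonoidHom
      naturality := by
        intro N N' g
        ext z
        have h1 := psiMap_comp R ψ (𝟙 _) f g (𝟙 _)
        have h2 := psiMap_comp R ψ f (𝟙 _) (𝟙 _) g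
        simp only [Category.comp_id, Category.id_comp] at h1 h2
        rw [← h2] at h1
        exact congrArg (fun h => h z) (congrArg LinearMap.toAddMonoidHom h1) }
  map_id := by
    intro M
    apply NatTrans.ext
    funext N
    ext z
    exact congrArg (fun h => h z) (congrArg LinearMap.toAddMonoidHom (psiMap_id R ψ M N))
  map_comp := by
    intro M M' M'' f f'
    apply NatTrans.ext
    funext N
    ext z
    have := psiMap_comp R ψ f f' (𝟙 N) (𝟙 N)
    simp only [Category.comp_id] at this
    exact (congrArg (fun h => h z) (congrArg LinearMap.toAddMonoidHom this)).symm

section TensorFunctor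

variable (S S' : Type) [Ring S] [Ring S'] (F : ModuleCat S ⥤ ModuleCat S')

/-- Right multiplication by `r` as an endomorphism of `S` as a left `S`-module. -/
def rmulLin (r : S) : S →ₗ[S] S where
  toFun x := x * r
  map_add' a b := add_mul a b r
  map_smul' s a := by simp [mul_assoc, smul_eq_mul]

/-- Right multiplication by `r`, as a morphism in `Mod(S)`. -/
def rmul (r : S) : ModuleCat.of S S ⟶ ModuleCat.of S S := ModuleCat.ofHom (rmulLin S r)

/-- The relations defining `F(S) ⊗_S M` inside `F(S) ⊗_ℤ M`, where the right `S`-module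
structure on the `(S', S)`-bimodule `K = F(S)` comes from functoriality of `F` applied to
right multiplications. -/
def tensRelSet (M : ModuleCat S) : Set ((F.obj (ModuleCat.of S S)) ⊗[ℤ] M) :=
  {z | ∃ (r : S) (kk : F.obj (ModuleCat.of S S)) (m : M),
    z = (F.map (rmul S r) kk) ⊗ₜ[ℤ] m - kk ⊗ₜ[ℤ] (r • m)}

/-- The `S'`-module `K ⊗_S M`, where `K = F(S)`. -/
def TensCar (M : ModuleCat S) : Type :=
  ((F.obj (ModuleCat.of S S)) ⊗[ℤ] M) ⧸ Submodule.span S' (tensRelSet S S' F M)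

noncomputable instance (M : ModuleCat S) : AddCommGroup (TensCar S S' F M) := by
  unfold TensCar; infer_instance

noncomputable instance (M : ModuleCat S) : Module S' (TensCar S S' F M) := by
  unfold TensCar; infer_instance

/-- The underlying `S'`-linear map `K ⊗_ℤ M → K ⊗_ℤ M'` induced by `f : M → M'`. -/
noncomputable def tensMapAux {M M' : ModuleCat S} (f : M ⟶ M') :
    ((F.obj (ModuleCat.of S S)) ⊗[ℤ] M) →ₗ[S'] ((F.obj (ModuleCat.of S S)) ⊗[ℤ] M') where
  toFun := TensorProduct.map LinearMap.id f.hom.toAddMonoidHom.toIntLinearMap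
  map_add' := map_add _
  map_smul' r' z := by
    induction z using TensorProduct.induction_on with
    | zero => simp
    | tmul kk m => simp [TensorProduct.smul_tmul', TensorProduct.map_tmul]
    | add a b ha hb => simp only [smul_add, map_add, RingHom.id_apply] at *; rw [ha, hb]

/-- Functoriality of `K ⊗_S (−)`, `K = F(S)`. -/
noncomputable def tensMap {M M' : ModuleCat S} (f : M ⟶ M') :
    TensCar S S' F M →ₗ[S'] TensCar S S' F M' :=
  Submodule.mapQ _ _ (tensMapAux S S' F f)
    (by
      rw [Submodule.span_le]
      rintro z ⟨r, kk, m, rfl⟩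
      simp only [SetLike.mem_coe, Submodule.mem_comap, map_sub]
      have : tensMapAux S S' F f ((F.map (rmul S r) kk) ⊗ₜ[ℤ] m)
          - tensMapAux S S' F f (kk ⊗ₜ[ℤ] (r • m))
          = (F.map (rmul S r) kk) ⊗ₜ[ℤ] (f m) - kk ⊗ₜ[ℤ] (r • f m) := by
        simp [tensMapAux, TensorProduct.map_tmul, map_smul]
      rw [this]
      exact Submodule.subset_span ⟨r, kk, f m, rfl⟩)

lemma tensMap_id (M : ModuleCat S) : tensMap S S' F (𝟙 M) = LinearMap.id := by
  apply Submodule.linearMap_qext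
  apply LinearMap.ext
  intro z
  induction z using TensorProduct.induction_on with
  | zero => simp
  | tmul kk m => simp [tensMap, Submodule.mapQ_apply, tensMapAux]; rfl
  | add a b ha hb => simp only [map_add] at *; rw [ha, hb]

lemma tensMap_comp {M M' M'' : ModuleCat S} (f : M ⟶ M') (g : M' ⟶ M'') :
    (tensMap S S' F g).comp (tensMap S S' F f) = tensMap S S' F (f ≫ g) := by
  apply Submodule.linearMap_qext
  apply LinearMap.ext
  intro z
  induction z using TensorProduct.induction_on with
  | zero => simp
  | tmul kk m => simp [tensMap, Submodule.mapQ_apply, tensMapAux]; rfl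
  | add a b ha hb => simp only [map_add] at *; rw [ha, hb]

/-- The functor `K ⊗_S (−) : Mod(S) → Mod(S')`, where `K = F(S)` is the natural
`(S', S)`-bimodule. -/
noncomputable def TensFunctor : ModuleCat S ⥤ ModuleCat S' where
  obj M := ModuleCat.of S' (TensCar S S' F M)
  map f := ModuleCat.ofHom (tensMap S S' F f)
  map_id := by
    intro M
    exact congrArg ModuleCat.ofHom (tensMap_id S S' F M)
  map_comp := by
    intro M M' M'' f g
    exact (congrArg ModuleCat.ofHom (tensMap_comp S S' F f g)).symm

end TensorFunctor

namespace PsiProof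

variable {R}

noncomputable def psiMk (M N : Type) [AddCommGroup M] [AddCommGroup N] [Module R M]
    [Module R N] : (M ⊗[ℤ] N) →ₗ[ℤ] PsiCar R ψ M N := Submodule.mkQ _

lemma psiMk_surjective (M N : Type) [AddCommGroup M] [AddCommGroup N] [Module R M]
    [Module R N] : Function.Surjective (psiMk ψ M N) := Submodule.mkQ_surjective _

lemma psiCar_ind {M N : Type} [AddCommGroup M] [AddCommGroup N] [Module R M] [Module R N]
    {p : PsiCar R ψ M N → Prop} (h0 : p 0) (hadd : ∀ x y, p x → p y → p (x + y))
    (htm : ∀ (m : M) (n : N), p (psiMk ψ M N (m ⊗ₜ[ℤ] n))) : ∀ z, p z := by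
  intro z
  obtain ⟨w, rfl⟩ := psiMk_surjective ψ M N z
  induction w using TensorProduct.induction_on with
  | zero => simpa using h0
  | tmul m n => exact htm m n
  | add a b ha hb => rw [map_add]; exact hadd _ _ ha hb

/-- untwist first slot over `R` itself -/
noncomputable def unFstLin (hψ : ∀ r : R, (ψ ((ψ r).unop)).unop = r) (N : ModuleCat R) :
    PsiCar R ψ (ModuleCat.of R R) N →ₗ[ℤ] N :=
  Submodule.liftQ _
    (TensorProduct.lift (LinearMap.mk₂ ℤ (fun m n => (ψ m).unop • n)
      (fun a b n => by simp [map_add, add_smul])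
      (fun c a n => by
        show (ψ (c • a)).unop • n = c • ((ψ a).unop • n)
        rw [map_zsmul, MulOpposite.unop_smul, smul_assoc])
      (fun a m n => by simp [smul_add])
      (fun c a n => by rw [smul_comm])))
    (by
      rw [Submodule.span_le]
      rintro z ⟨r, m, n, rfl⟩
      simp only [SetLike.mem_coe]
      change TensorProduct.lift _ _ = 0
      rw [map_sub, TensorProduct.lift.tmul, TensorProduct.lift.tmul, LinearMap.mk₂_apply,
        LinearMap.mk₂_apply]
      show (ψ ((ψ r).unop • m)).unop • n - (ψ m).unop • (r • n) = 0
      have hmm : ((ψ r).unop • m) = (ψ r).unop * (show R from m) := rfl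
      rw [hmm, map_mul]
      simp only [MulOpposite.unop_mul, hψ, mul_smul, sub_self])

lemma unFstLin_mk (hψ : ∀ r : R, (ψ ((ψ r).unop)).unop = r) (N : ModuleCat R)
    (m : R) (n : N) :
    unFstLin ψ hψ N (psiMk ψ (ModuleCat.of R R) N (m ⊗ₜ[ℤ] n)) = (ψ m).unop • n := rfl

lemma psiMk_rel (hψ : ∀ r : R, (ψ ((ψ r).unop)).unop = r) {N : ModuleCat R} (m : R) (n : N) :
    psiMk ψ (ModuleCat.of R R) N (m ⊗ₜ[ℤ] n)
      = psiMk ψ (ModuleCat.of R R) N ((1:R) ⊗ₜ[ℤ] ((ψ m).unop • n)) := by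
  refine (Submodule.Quotient.eq _).mpr (Submodule.subset_span ⟨(ψ m).unop, (1:R), n, ?_⟩)
  rw [hψ]
  simp only [smul_eq_mul, mul_one]

noncomputable def unFst (hψ : ∀ r : R, (ψ ((ψ r).unop)).unop = r) (N : ModuleCat R) :
    PsiCar R ψ (ModuleCat.of R R) N ≃+ N where
  toFun := unFstLin ψ hψ N
  invFun n := psiMk ψ (ModuleCat.of R R) N ((1:R) ⊗ₜ[ℤ] n)
  left_inv := by
    refine psiCar_ind ψ ?_ ?_ ?_
    · simp
    · intro x y hx hy
      dsimp only at hx hy ⊢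
      rw [map_add, tmul_add, map_add, hx, hy]
    · intro m n
      dsimp only
      rw [unFstLin_mk]
      exact (psiMk_rel ψ hψ m n).symm
  right_inv n := by
    show unFstLin ψ hψ N (psiMk ψ (ModuleCat.of R R) N ((1:R) ⊗ₜ[ℤ] n)) = n
    rw [unFstLin_mk]; simp
  map_add' := map_add _

/-- untwist second slot over `R` itself (no involution hypothesis needed) -/
noncomputable def unSndLin (X : ModuleCat R) :
    PsiCar R ψ X (ModuleCat.of R R) →ₗ[ℤ] X :=
  Submodule.liftQ _
    (TensorProduct.lift (LinearMap.mk₂ ℤ (fun x n => (ψ n).unop • x)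
      (fun a b n => by simp [smul_add])
      (fun c a n => by
        show (ψ n).unop • (c • a) = c • ((ψ n).unop • a)
        rw [smul_comm])
      (fun a m n => by simp [map_add, add_smul])
      (fun c a n => by
        show (ψ (c • n)).unop • a = c • ((ψ n).unop • a)
        rw [map_zsmul, MulOpposite.unop_smul, smul_assoc])))
    (by
      rw [Submodule.span_le]
      rintro z ⟨r, m, n, rfl⟩
      simp only [SetLike.mem_coe]
      change TensorProduct.lift _ _ = 0
      rw [map_sub]
      show (ψ n).unop • ((ψ r).unop • m) - (ψ (r • n)).unop • m = 0
      have hmm : (r • n) = r * (show R from n) := rfl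
      rw [hmm, map_mul]
      simp only [MulOpposite.unop_mul, mul_smul, sub_self])

lemma unSndLin_mk (X : ModuleCat R) (x : X) (n : R) :
    unSndLin ψ X (psiMk ψ X (ModuleCat.of R R) (x ⊗ₜ[ℤ] n)) = (ψ n).unop • x := rfl

lemma psiMk_rel' {X : ModuleCat R} (x : X) (n : R) :
    psiMk ψ X (ModuleCat.of R R) (x ⊗ₜ[ℤ] n)
      = psiMk ψ X (ModuleCat.of R R) (((ψ n).unop • x) ⊗ₜ[ℤ] (1:R)) := by
  refine (Submodule.Quotient.eq _).mpr ?_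
  have : (x ⊗ₜ[ℤ] n - ((ψ n).unop • x) ⊗ₜ[ℤ] (1:R))
      = -((((ψ n).unop • x) ⊗ₜ[ℤ] (1:R)) - x ⊗ₜ[ℤ] (n • (1:R))) := by
    have h1 : (n • (1:R)) = n * 1 := rfl
    rw [h1, mul_one]; abel
  rw [this]
  exact neg_mem (Submodule.subset_span ⟨n, x, (1:R), rfl⟩)

noncomputable def unSnd (X : ModuleCat R) :
    PsiCar R ψ X (ModuleCat.of R R) ≃+ X where
  toFun := unSndLin ψ X
  invFun x := psiMk ψ X (ModuleCat.of R R) (x ⊗ₜ[ℤ] (1:R))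
  left_inv := by
    refine psiCar_ind ψ ?_ ?_ ?_
    · simp
    · intro x y hx hy
      dsimp only at hx hy ⊢
      rw [map_add, add_tmul, map_add, hx, hy]
    · intro x n
      dsimp only
      rw [unSndLin_mk]
      exact (psiMk_rel' ψ x n).symm
  right_inv x := by
    show unSndLin ψ X (psiMk ψ X (ModuleCat.of R R) (x ⊗ₜ[ℤ] (1:R))) = x
    rw [unSndLin_mk]; simp
  map_add' := map_add _

lemma psiMap_mk {M M' N N' : ModuleCat R} (f : M ⟶ M') (g : N ⟶ N') (m : M) (n : N) :
    psiMap R ψ f g (psiMk ψ M N (m ⊗ₜ[ℤ] n)) = psiMk ψ M' N' (f m ⊗ₜ[ℤ] g n) := rfl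

lemma unFst_nat (hψ : ∀ r : R, (ψ ((ψ r).unop)).unop = r) {N N₂ : ModuleCat R}
    (g : N ⟶ N₂) (z : PsiCar R ψ (ModuleCat.of R R) N) :
    unFstLin ψ hψ N₂ (psiMap R ψ (𝟙 (ModuleCat.of R R)) g z) = g (unFstLin ψ hψ N z) := by
  induction z using psiCar_ind with
  | h0 => simp
  | hadd x y hx hy => rw [map_add, map_add, map_add, map_add, hx, hy]
  | htm m n =>
      rw [psiMap_mk, unFstLin_mk, unFstLin_mk]
      show (ψ ((𝟙 (ModuleCat.of R R) : _ ⟶ _) m)).unop • g n = g ((ψ m).unop • n)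
      rw [ModuleCat.id_apply, map_smul]

lemma unFst_rmul (hψ : ∀ r : R, (ψ ((ψ r).unop)).unop = r) {N : ModuleCat R} (r : R)
    (z : PsiCar R ψ (ModuleCat.of R R) N) :
    unFstLin ψ hψ N (psiMap R ψ (rmul R r) (𝟙 N) z) = (ψ r).unop • unFstLin ψ hψ N z := by
  induction z using psiCar_ind with
  | h0 => simp
  | hadd x y hx hy => rw [map_add, map_add, map_add, smul_add, hx, hy]
  | htm m n =>
      rw [psiMap_mk, unFstLin_mk, unFstLin_mk]
      show (ψ (rmul R r m)).unop • ((𝟙 N : N ⟶ N) n) = (ψ r).unop • ((ψ m).unop • n)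
      have h1 : rmul R r m = (show R from m) * r := rfl
      rw [ModuleCat.id_apply, h1, map_mul, MulOpposite.unop_mul, mul_smul]

lemma unSnd_nat {X X₂ : ModuleCat R} (f : X ⟶ X₂) (z : PsiCar R ψ X (ModuleCat.of R R)) :
    unSndLin ψ X₂ (psiMap R ψ f (𝟙 (ModuleCat.of R R)) z) = f (unSndLin ψ X z) := by
  induction z using psiCar_ind with
  | h0 => simp
  | hadd x y hx hy => rw [map_add, map_add, map_add, map_add, hx, hy]
  | htm x n =>
      rw [psiMap_mk, unSndLin_mk, unSndLin_mk]
      show (ψ ((𝟙 (ModuleCat.of R R) : _ ⟶ _) n)).unop • f x = f ((ψ n).unop • x)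
      rw [ModuleCat.id_apply, map_smul]

lemma unSnd_rmul {X : ModuleCat R} (r : R) (z : PsiCar R ψ X (ModuleCat.of R R)) :
    unSndLin ψ X (psiMap R ψ (𝟙 X) (rmul R r) z) = (ψ r).unop • unSndLin ψ X z := by
  induction z using psiCar_ind with
  | h0 => simp
  | hadd x y hx hy => rw [map_add, map_add, map_add, smul_add, hx, hy]
  | htm x n =>
      rw [psiMap_mk, unSndLin_mk, unSndLin_mk]
      show (ψ (rmul R r n)).unop • ((𝟙 X : X ⟶ X) x) = (ψ r).unop • ((ψ n).unop • x)
      have h1 : rmul R r n = (show R from n) * r := rfl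
      rw [ModuleCat.id_apply, h1, map_mul, MulOpposite.unop_mul, mul_smul]


section Adj

variable {R' : Type} [Ring R'] {ψ' : R' →+* R'ᵐᵒᵖ}
variable {F : ModuleCat R ⥤ ModuleCat R'} {G : ModuleCat R' ⥤ ModuleCat R}
variable (a : (F ⋙ PsiFunctor R' ψ') ≅
      (PsiFunctor R ψ ⋙ (CategoryTheory.Functor.whiskeringLeft (ModuleCat R') (ModuleCat R)
        AddCommGrpCat).obj G))

noncomputable def alphaEquiv (M : ModuleCat R) (N : ModuleCat R') :
    PsiCar R' ψ' (F.obj M) N ≃+ PsiCar R ψ M (G.obj N) :=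
  ((a.app M).app N).addCommGroupIsoToAddEquiv

lemma alpha_nat_left {M M₂ : ModuleCat R} (f : M ⟶ M₂) (N : ModuleCat R')
    (z : PsiCar R' ψ' (F.obj M) N) :
    alphaEquiv ψ a M₂ N (psiMap R' ψ' (F.map f) (𝟙 N) z)
      = psiMap R ψ f (𝟙 (G.obj N)) (alphaEquiv ψ a M N z) := by
  have h := NatTrans.congr_app (a.hom.naturality f) N
  exact congrArg (fun (t : AddCommGrpCat.of (PsiCar R' ψ' (F.obj M) N) ⟶
    AddCommGrpCat.of (PsiCar R ψ M₂ (G.obj N))) => t z) h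

lemma alpha_nat_right (M : ModuleCat R) {N N₂ : ModuleCat R'} (g : N ⟶ N₂)
    (z : PsiCar R' ψ' (F.obj M) N) :
    alphaEquiv ψ a M N₂ (psiMap R' ψ' (𝟙 (F.obj M)) g z)
      = psiMap R ψ (𝟙 M) (G.map g) (alphaEquiv ψ a M N z) := by
  have h := (a.hom.app M).naturality g
  exact congrArg (fun (t : AddCommGrpCat.of (PsiCar R' ψ' (F.obj M) N) ⟶
    AddCommGrpCat.of (PsiCar R ψ M (G.obj N₂))) => t z) h

lemma unSnd_apply (X : ModuleCat R) (z : PsiCar R ψ X (ModuleCat.of R R)) :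
    unSnd ψ X z = unSndLin ψ X z := rfl

lemma unFst_apply (hψ : ∀ r : R, (ψ ((ψ r).unop)).unop = r) (N : ModuleCat R)
    (z : PsiCar R ψ (ModuleCat.of R R) N) :
    unFst ψ hψ N z = unFstLin ψ hψ N z := rfl

variable (hψ : ∀ r : R, (ψ ((ψ r).unop)).unop = r)

noncomputable def eEquiv : F.obj (ModuleCat.of R R) ≃+ G.obj (ModuleCat.of R' R') :=
  ((unSnd ψ' (F.obj (ModuleCat.of R R))).symm.trans
    (alphaEquiv ψ a (ModuleCat.of R R) (ModuleCat.of R' R'))).trans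
    (unFst ψ hψ (G.obj (ModuleCat.of R' R')))

lemma eEquiv_apply (k : F.obj (ModuleCat.of R R)) :
    eEquiv ψ a hψ k = unFstLin ψ hψ (G.obj (ModuleCat.of R' R'))
      (alphaEquiv ψ a (ModuleCat.of R R) (ModuleCat.of R' R')
        ((unSnd ψ' (F.obj (ModuleCat.of R R))).symm k)) := rfl

lemma e_prop1 (r : R) (k : F.obj (ModuleCat.of R R)) :
    eEquiv ψ a hψ (F.map (rmul R r) k) = (ψ r).unop • eEquiv ψ a hψ k := by
  have h1 : (unSnd ψ' (F.obj (ModuleCat.of R R))).symm (F.map (rmul R r) k)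
      = psiMap R' ψ' (F.map (rmul R r)) (𝟙 (ModuleCat.of R' R'))
        ((unSnd ψ' (F.obj (ModuleCat.of R R))).symm k) := by
    apply (unSnd ψ' (F.obj (ModuleCat.of R R))).injective
    rw [AddEquiv.apply_symm_apply, unSnd_apply, unSnd_nat, ← unSnd_apply,
      AddEquiv.apply_symm_apply]
  rw [eEquiv_apply, h1, alpha_nat_left, unFst_rmul, ← eEquiv_apply]

lemma e_prop2 (r' : R') (k : F.obj (ModuleCat.of R R)) :
    eEquiv ψ a hψ (((ψ' r').unop : R') • k) = G.map (rmul R' r') (eEquiv ψ a hψ k) := by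
  have h1 : (unSnd ψ' (F.obj (ModuleCat.of R R))).symm (((ψ' r').unop : R') • k)
      = psiMap R' ψ' (𝟙 (F.obj (ModuleCat.of R R))) (rmul R' r')
        ((unSnd ψ' (F.obj (ModuleCat.of R R))).symm k) := by
    apply (unSnd ψ' (F.obj (ModuleCat.of R R))).injective
    rw [AddEquiv.apply_symm_apply, unSnd_apply, unSnd_rmul, ← unSnd_apply,
      AddEquiv.apply_symm_apply]
  rw [eEquiv_apply, h1, alpha_nat_right, unFst_nat, ← eEquiv_apply]

lemma e_symm_smul (r : R) (n : G.obj (ModuleCat.of R' R')) :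
    (eEquiv ψ a hψ).symm (r • n)
      = F.map (rmul R ((ψ r).unop)) ((eEquiv ψ a hψ).symm n) := by
  apply (eEquiv ψ a hψ).injective
  rw [AddEquiv.apply_symm_apply, e_prop1, hψ, AddEquiv.apply_symm_apply]

lemma e_symm_Gmap (r' : R') (n : G.obj (ModuleCat.of R' R')) :
    (eEquiv ψ a hψ).symm (G.map (rmul R' r') n)
      = ((ψ' r').unop : R') • (eEquiv ψ a hψ).symm n := by
  apply (eEquiv ψ a hψ).injective
  rw [AddEquiv.apply_symm_apply, e_prop2, AddEquiv.apply_symm_apply]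

noncomputable def tensMk (M : ModuleCat R) :
    ((F.obj (ModuleCat.of R R)) ⊗[ℤ] M) →ₗ[R'] TensCar R R' F M := Submodule.mkQ _

lemma tensMk_surjective (M : ModuleCat R) : Function.Surjective (tensMk (F := F) M) :=
  Submodule.mkQ_surjective _

lemma tensCar_ind {M : ModuleCat R} {p : TensCar R R' F M → Prop} (h0 : p 0)
    (hadd : ∀ x y, p x → p y → p (x + y))
    (htm : ∀ k m, p (tensMk M (k ⊗ₜ[ℤ] m))) : ∀ z, p z := by
  intro z
  obtain ⟨w, rfl⟩ := tensMk_surjective M z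
  induction w using TensorProduct.induction_on with
  | zero => simpa using h0
  | tmul k m => exact htm k m
  | add x y hx hy => rw [map_add]; exact hadd _ _ hx hy

noncomputable def flipLin (M : ModuleCat R) :
    PsiCar R ψ M (G.obj (ModuleCat.of R' R')) →ₗ[ℤ] TensCar R R' F M :=
  Submodule.liftQ _
    (TensorProduct.lift (LinearMap.mk₂ ℤ
      (fun m n => tensMk M (((eEquiv ψ a hψ).symm n) ⊗ₜ[ℤ] m))
      (fun m m' n => by
        show tensMk M ((eEquiv ψ a hψ).symm n ⊗ₜ[ℤ] (m + m')) = _ + _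
        rw [tmul_add, map_add])
      (fun c m n => by
        show tensMk M ((eEquiv ψ a hψ).symm n ⊗ₜ[ℤ] (c • m))
          = c • tensMk M ((eEquiv ψ a hψ).symm n ⊗ₜ[ℤ] m)
        rw [tmul_smul, map_zsmul])
      (fun m n n' => by
        show tensMk M ((eEquiv ψ a hψ).symm (n + n') ⊗ₜ[ℤ] m) = _ + _
        rw [map_add, add_tmul, map_add])
      (fun c m n => by
        show tensMk M ((eEquiv ψ a hψ).symm (c • n) ⊗ₜ[ℤ] m)
          = c • tensMk M ((eEquiv ψ a hψ).symm n ⊗ₜ[ℤ] m)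
        rw [map_zsmul, ← TensorProduct.smul_tmul', map_zsmul])))
    (by
      rw [Submodule.span_le]
      rintro z ⟨r, m, n, rfl⟩
      simp only [SetLike.mem_coe]
      change TensorProduct.lift _ _ = 0
      rw [map_sub, TensorProduct.lift.tmul, TensorProduct.lift.tmul, LinearMap.mk₂_apply,
        LinearMap.mk₂_apply]
      rw [e_symm_smul ψ a hψ, ← map_sub]
      have : ((eEquiv ψ a hψ).symm n ⊗ₜ[ℤ] ((ψ r).unop • m)
            - (F.map (rmul R ((ψ r).unop)) ((eEquiv ψ a hψ).symm n)) ⊗ₜ[ℤ] m)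
          = -((F.map (rmul R ((ψ r).unop)) ((eEquiv ψ a hψ).symm n)) ⊗ₜ[ℤ] m
            - (eEquiv ψ a hψ).symm n ⊗ₜ[ℤ] (((ψ r).unop : R) • m)) := by abel
      rw [this]
      exact (Submodule.Quotient.mk_eq_zero _).mpr
        (neg_mem (Submodule.subset_span ⟨(ψ r).unop, (eEquiv ψ a hψ).symm n, m, rfl⟩)))

lemma flipLin_mk (M : ModuleCat R) (m : M) (n : G.obj (ModuleCat.of R' R')) :
    flipLin ψ a hψ M (psiMk ψ M (G.obj (ModuleCat.of R' R')) (m ⊗ₜ[ℤ] n))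
      = tensMk M (((eEquiv ψ a hψ).symm n) ⊗ₜ[ℤ] m) := rfl

noncomputable def invFlipAux (M : ModuleCat R) :
    ((F.obj (ModuleCat.of R R)) ⊗[ℤ] M) →ₗ[ℤ] PsiCar R ψ M (G.obj (ModuleCat.of R' R')) :=
  TensorProduct.lift (LinearMap.mk₂ ℤ
    (fun k m => psiMk ψ M (G.obj (ModuleCat.of R' R')) (m ⊗ₜ[ℤ] (eEquiv ψ a hψ k)))
    (fun k k' m => by
      show psiMk ψ M _ (m ⊗ₜ[ℤ] (eEquiv ψ a hψ (k + k'))) = _ + _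
      rw [map_add, tmul_add, map_add])
    (fun c k m => by
      show psiMk ψ M _ (m ⊗ₜ[ℤ] (eEquiv ψ a hψ (c • k)))
        = c • psiMk ψ M _ (m ⊗ₜ[ℤ] (eEquiv ψ a hψ k))
      rw [map_zsmul, tmul_smul, map_zsmul])
    (fun k m m' => by
      show psiMk ψ M _ ((m + m') ⊗ₜ[ℤ] (eEquiv ψ a hψ k)) = _ + _
      rw [add_tmul, map_add])
    (fun c k m => by
      show psiMk ψ M _ ((c • m) ⊗ₜ[ℤ] (eEquiv ψ a hψ k))
        = c • psiMk ψ M _ (m ⊗ₜ[ℤ] (eEquiv ψ a hψ k))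
      rw [← TensorProduct.smul_tmul', map_zsmul]))

lemma invFlipAux_ker {M : ModuleCat R} :
    ∀ z ∈ Submodule.span R' (tensRelSet R R' F M), invFlipAux ψ a hψ M z = 0 := by
  have key : ∀ z ∈ Submodule.span R' (tensRelSet R R' F M),
      ∀ r' : R', invFlipAux ψ a hψ M (r' • z) = 0 := by
    intro z hz
    induction hz using Submodule.span_induction with
    | mem z hzz =>
        obtain ⟨r, kk, m, rfl⟩ := hzz
        intro r'
        rw [smul_sub, TensorProduct.smul_tmul', TensorProduct.smul_tmul', map_sub]
        have hFsm : (r' • F.map (rmul R r) kk) = F.map (rmul R r) (r' • kk) :=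
          (map_smul (F.map (rmul R r)).hom r' kk).symm
        rw [hFsm]
        show psiMk ψ M _ (m ⊗ₜ[ℤ] (eEquiv ψ a hψ (F.map (rmul R r) (r' • kk))))
          - psiMk ψ M _ ((r • m) ⊗ₜ[ℤ] (eEquiv ψ a hψ (r' • kk))) = 0
        rw [e_prop1, ← map_sub]
        have : (m ⊗ₜ[ℤ] ((ψ r).unop • eEquiv ψ a hψ (r' • kk))
              - (r • m) ⊗ₜ[ℤ] (eEquiv ψ a hψ (r' • kk)))
            = -((((ψ ((ψ r).unop)).unop • m) ⊗ₜ[ℤ] (eEquiv ψ a hψ (r' • kk))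
              - m ⊗ₜ[ℤ] (((ψ r).unop : R) • (eEquiv ψ a hψ (r' • kk))))) := by
          rw [hψ]; abel
        rw [this]
        exact (Submodule.Quotient.mk_eq_zero _).mpr
          (neg_mem (Submodule.subset_span ⟨(ψ r).unop, m, eEquiv ψ a hψ (r' • kk), rfl⟩))
    | zero => intro r'; rw [smul_zero, map_zero]
    | add x y _ _ hx hy => intro r'; rw [smul_add, map_add, hx, hy, add_zero]
    | smul c x _ hx => intro r'; rw [smul_smul]; exact hx _
  intro z hz
  have := key z hz 1
  rwa [one_smul] at this

noncomputable def invFlipLin (M : ModuleCat R) :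
    TensCar R R' F M →ₗ[ℤ] PsiCar R ψ M (G.obj (ModuleCat.of R' R')) :=
  (Submodule.liftQ ((Submodule.span R' (tensRelSet R R' F M)).restrictScalars ℤ)
      (invFlipAux ψ a hψ M)
      (fun z hz => invFlipAux_ker ψ a hψ z hz)).comp
    (Submodule.Quotient.restrictScalarsEquiv ℤ
      (Submodule.span R' (tensRelSet R R' F M))).symm.toLinearMap

set_option maxHeartbeats 1000000 in
lemma invFlipLin_mk (M : ModuleCat R) (k : F.obj (ModuleCat.of R R)) (m : M) :
    invFlipLin ψ a hψ M (tensMk M (k ⊗ₜ[ℤ] m))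
      = psiMk ψ M (G.obj (ModuleCat.of R' R')) (m ⊗ₜ[ℤ] (eEquiv ψ a hψ k)) := by
  show (Submodule.liftQ ((Submodule.span R' (tensRelSet R R' F M)).restrictScalars ℤ)
      (invFlipAux ψ a hψ M) (fun z hz => invFlipAux_ker ψ a hψ z hz))
      ((Submodule.Quotient.restrictScalarsEquiv ℤ
        (Submodule.span R' (tensRelSet R R' F M))).symm
        (Submodule.Quotient.mk (k ⊗ₜ[ℤ] m))) = _
  rw [Submodule.Quotient.restrictScalarsEquiv_symm_mk]
  rfl

noncomputable def flipEquiv (M : ModuleCat R) :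
    PsiCar R ψ M (G.obj (ModuleCat.of R' R')) ≃+ TensCar R R' F M where
  toFun := flipLin ψ a hψ M
  invFun := invFlipLin ψ a hψ M
  left_inv := by
    refine psiCar_ind ψ ?_ ?_ ?_
    · simp
    · intro x y hx hy; rw [map_add, map_add, hx, hy]
    · intro m n
      rw [flipLin_mk, invFlipLin_mk, AddEquiv.apply_symm_apply]
  right_inv := by
    refine tensCar_ind ?_ ?_ ?_
    · simp
    · intro x y hx hy; rw [map_add, map_add, hx, hy]
    · intro k m
      rw [invFlipLin_mk, flipLin_mk, AddEquiv.symm_apply_apply]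
  map_add' := map_add _

lemma tensMap_mk {M M₂ : ModuleCat R} (f : M ⟶ M₂) (k : F.obj (ModuleCat.of R R)) (m : M) :
    tensMap R R' F f (tensMk M (k ⊗ₜ[ℤ] m)) = tensMk M₂ (k ⊗ₜ[ℤ] f m) := rfl

noncomputable def thetaEquiv (M : ModuleCat R) : F.obj M ≃+ TensCar R R' F M :=
  ((unSnd ψ' (F.obj M)).symm.trans (alphaEquiv ψ a M (ModuleCat.of R' R'))).trans
    (flipEquiv ψ a hψ M)

lemma thetaEquiv_apply (M : ModuleCat R) (x : F.obj M) :
    thetaEquiv ψ a hψ M x = flipLin ψ a hψ M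
      (alphaEquiv ψ a M (ModuleCat.of R' R') ((unSnd ψ' (F.obj M)).symm x)) := rfl

lemma flip_Gmap (M : ModuleCat R) (r' : R')
    (z : PsiCar R ψ M (G.obj (ModuleCat.of R' R'))) :
    flipLin ψ a hψ M (psiMap R ψ (𝟙 M) (G.map (rmul R' r')) z)
      = ((ψ' r').unop : R') • flipLin ψ a hψ M z := by
  induction z using psiCar_ind with
  | h0 => simp
  | hadd x y hx hy => rw [map_add, map_add, map_add, smul_add, hx, hy]
  | htm m n =>
      rw [psiMap_mk, flipLin_mk, flipLin_mk, e_symm_Gmap, ← TensorProduct.smul_tmul',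
        map_smul]
      simp [ModuleCat.id_apply]

lemma flip_nat {M M₂ : ModuleCat R} (f : M ⟶ M₂)
    (z : PsiCar R ψ M (G.obj (ModuleCat.of R' R'))) :
    flipLin ψ a hψ M₂ (psiMap R ψ f (𝟙 (G.obj (ModuleCat.of R' R'))) z)
      = tensMap R R' F f (flipLin ψ a hψ M z) := by
  induction z using psiCar_ind with
  | h0 => simp
  | hadd x y hx hy => rw [map_add, map_add, map_add, map_add, hx, hy]
  | htm m n =>
      rw [psiMap_mk, flipLin_mk, flipLin_mk, tensMap_mk]
      simp [ModuleCat.id_apply]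

lemma theta_smul (hψ' : ∀ r : R', (ψ' ((ψ' r).unop)).unop = r)
    (M : ModuleCat R) (s' : R') (x : F.obj M) :
    thetaEquiv ψ a hψ M (s' • x) = s' • thetaEquiv ψ a hψ M x := by
  have h1 : (unSnd ψ' (F.obj M)).symm (s' • x)
      = psiMap R' ψ' (𝟙 (F.obj M)) (rmul R' ((ψ' s').unop))
        ((unSnd ψ' (F.obj M)).symm x) := by
    apply (unSnd ψ' (F.obj M)).injective
    rw [AddEquiv.apply_symm_apply, unSnd_apply, unSnd_rmul, hψ', ← unSnd_apply,
      AddEquiv.apply_symm_apply]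
  rw [thetaEquiv_apply, h1, alpha_nat_right, flip_Gmap, hψ', ← thetaEquiv_apply]

lemma theta_nat {M M₂ : ModuleCat R} (f : M ⟶ M₂) (x : F.obj M) :
    thetaEquiv ψ a hψ M₂ (F.map f x) = tensMap R R' F f (thetaEquiv ψ a hψ M x) := by
  have h1 : (unSnd ψ' (F.obj M₂)).symm (F.map f x)
      = psiMap R' ψ' (F.map f) (𝟙 (ModuleCat.of R' R'))
        ((unSnd ψ' (F.obj M)).symm x) := by
    apply (unSnd ψ' (F.obj M₂)).injective
    rw [AddEquiv.apply_symm_apply, unSnd_apply, unSnd_nat, ← unSnd_apply,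
      AddEquiv.apply_symm_apply]
  rw [thetaEquiv_apply, h1, alpha_nat_left, flip_nat, ← thetaEquiv_apply]

end Adj

end PsiProof

/-- **Functors admitting a `Ψ`-adjoint are tensor functors.**
Let `R`, `R′` be rings with anti-involutions `ψ`, `ψ′`, and let
`F : Mod(R) → Mod(R′)` be an additive (`k`-linear) functor admitting a `Ψ`-adjoint `G`,
i.e. there is a functorial isomorphism `Ψ′(F(M), N) ≅ Ψ(M, G(N))` where
`Ψ(M,N) = Mᵠ ⊗_R N`.  Then:
(1) `F` is isomorphic to the functor `K ⊗_R (−)` where `K = F(R)` is the natural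
`(R′, R)`-bimodule, and
(2) `G(R′) ≅ F(R)^ψ` as `(R, R′)`-bimodules; concretely, there is an additive isomorphism
`e : F(R) ≃ G(R′)` with `e(k ·_{F(R)} ψ(r)) = r • e(k)` and
`e(ψ′(r′) •_{F(R)} k) = e(k) ·_{G(R′)} r′`, where the right actions on `F(R)` and `G(R′)`
are induced by right multiplications via functoriality. -/
theorem psi_adjoint_is_tensor_functor
    (R' : Type) [Ring R'] (ψ' : R' →+* R'ᵐᵒᵖ)
    (hψ : ∀ r : R, (ψ ((ψ r).unop)).unop = r)
    (hψ' : ∀ r : R', (ψ' ((ψ' r).unop)).unop = r)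
    (F : ModuleCat R ⥤ ModuleCat R') [F.Additive]
    (G : ModuleCat R' ⥤ ModuleCat R)
    (hadj : Nonempty ((F ⋙ PsiFunctor R' ψ') ≅
      (PsiFunctor R ψ ⋙ (CategoryTheory.Functor.whiskeringLeft (ModuleCat R') (ModuleCat R)
        AddCommGrpCat).obj G))) :
    Nonempty (F ≅ TensFunctor R R' F) ∧
    ∃ e : (F.obj (ModuleCat.of R R)) ≃+ (G.obj (ModuleCat.of R' R')),
      (∀ (r : R) (kk : F.obj (ModuleCat.of R R)),
        e (F.map (rmul R ((ψ r).unop)) kk) = r • e kk) ∧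
      (∀ (r' : R') (kk : F.obj (ModuleCat.of R R)),
        e (((ψ' r').unop : R') • kk) = G.map (rmul R' r') (e kk)) := by
  classical
  obtain ⟨a⟩ := hadj
  constructor
  · refine ⟨NatIso.ofComponents (fun M =>
      LinearEquiv.toModuleIso (X₁ := F.obj M)
        (AddEquiv.toLinearEquiv (PsiProof.thetaEquiv ψ a hψ M)
          (fun s' x => PsiProof.theta_smul ψ a hψ hψ' M s' x))) ?_⟩
    intro M M₂ f
    ext x
    show PsiProof.thetaEquiv ψ a hψ M₂ (F.map f x)
      = tensMap R R' F f (PsiProof.thetaEquiv ψ a hψ M x)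
    exact PsiProof.theta_nat ψ a hψ f x
  · refine ⟨PsiProof.eEquiv ψ a hψ, ?_, ?_⟩
    · intro r k
      rw [PsiProof.e_prop1, hψ]
    · intro r' k
      exact PsiProof.e_prop2 ψ a hψ r' k
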